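/- arXiv:1711.10876 — 2 statements merged into one kernel-verified Lean document; each statement's English description precedes it below -/
import Mathlib

section
/- Let q be an odd prime power and S a set of q+2 points of PG(2,q). Let x, y, z be distinct points of S_{4/3} such that each line joining two of x, y, z is a bi-secant of S. Suppose Q is a nondegenerate quadratic form on F_q^3 vanishing at x, y and z such that, for each u ∈ {x,y,z}, the tangent line to S at u equals the polar line {v : B(u,v) = 0} of u with respect to Q, where B is the polar bilinear form of Q. For u ∈ {x,y,z} let g_u be a nonzero linear form whose kernel is the 3-secant to S at u. Then g_x(z)g_y(x)g_z(y) = −g_x(y)g_y(z)g_z(x), and consequently the three 3-secants ker g_x, ker g_y, ker g_z are concurrent: there is a point of PG(2,q) incident with all three. -/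
open Projectivization

abbrev Pt (F : Type) [Field F] : Type := Projectivization F (Fin 3 → F)

def IsLine (F : Type) [Field F] (W : Submodule F (Fin 3 → F)) : Prop :=
  Module.finrank F W = 2

noncomputable def secantCount (F : Type) [Field F] (S : Set (Pt F))
    (W : Submodule F (Fin 3 → F)) : ℕ :=
  {p ∈ S | p.submodule ≤ W}.ncard

noncomputable def oddSecants (F : Type) [Field F] (S : Set (Pt F)) : ℕ :=
  {W : Submodule F (Fin 3 → F) | IsLine F W ∧ Odd (secantCount F S W)}.ncard

noncomputable def linesThroughWithCount (F : Type) [Field F] (S : Set (Pt F))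
    (x : Pt F) (i : ℕ) : ℕ :=
  {W : Submodule F (Fin 3 → F) | IsLine F W ∧ x.submodule ≤ W ∧ secantCount F S W = i}.ncard

noncomputable def S43 (F : Type) [Field F] [Fintype F] (S : Set (Pt F)) : Set (Pt F) :=
  {x ∈ S | linesThroughWithCount F S x 1 = 1 ∧ linesThroughWithCount F S x 3 = 1 ∧
    linesThroughWithCount F S x 2 = Fintype.card F - 1}

section Helpers
set_option linter.unusedSectionVars false

variable {F : Type} [Field F] [Fintype F]

lemma pt_finite : Finite (Pt F) := Quotient.finite _

lemma sub_le_iff (p : Pt F) (W : Submodule F (Fin 3 → F)) :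
    p.submodule ≤ W ↔ p.rep ∈ W := by
  rw [Projectivization.submodule_eq, Submodule.span_singleton_le_iff_mem]

lemma li_pair {u v : Pt F} (h : u ≠ v) : LinearIndependent F ![u.rep, v.rep] := by
  have := (Projectivization.independent_pair_iff_ne u v).2 h
  rw [Projectivization.independent_iff] at this
  convert this using 1
  ext i; fin_cases i <;> rfl
  rfl

lemma span_pair_finrank {a b : Fin 3 → F} (h : LinearIndependent F ![a, b]) :
    Module.finrank F (Submodule.span F {a, b}) = 2 := by
  have h2 := finrank_span_eq_card h
  have hr : Set.range ![a, b] = {a, b} := by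
    rw [Matrix.range_cons, Matrix.range_cons, Matrix.range_empty]
    rw [Set.union_comm]; simp
  rw [hr] at h2
  simpa using h2

lemma sup_eq_span_pair (u v : Pt F) :
    u.submodule ⊔ v.submodule = Submodule.span F {u.rep, v.rep} := by
  rw [Projectivization.submodule_eq, Projectivization.submodule_eq, ← Submodule.span_union,
    Set.singleton_union]

lemma sup_line {u v : Pt F} (h : u ≠ v) : IsLine F (u.submodule ⊔ v.submodule) := by
  rw [IsLine, sup_eq_span_pair]
  exact span_pair_finrank (li_pair h)

/-- a line through two distinct points is their join -/
lemma line_eq_sup {u v : Pt F} {W : Submodule F (Fin 3 → F)} (h : u ≠ v)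
    (hW : IsLine F W) (hu : u.submodule ≤ W) (hv : v.submodule ≤ W) :
    W = u.submodule ⊔ v.submodule := by
  refine (Submodule.eq_of_le_of_finrank_eq (sup_le hu hv) ?_).symm
  rw [hW, sup_line h]

/-- points of S on a bisecant through two points of S -/
lemma mem_bisecant {S : Set (Pt F)} {u v p : Pt F} (hu : u ∈ S) (hv : v ∈ S) (huv : u ≠ v)
    (h2 : secantCount F S (u.submodule ⊔ v.submodule) = 2)
    (hp : p ∈ S) (hle : p.rep ∈ u.submodule ⊔ v.submodule) : p = u ∨ p = v := by
  have hfin : Finite (Pt F) := pt_finite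
  have hsub : ({u, v} : Set (Pt F)) ⊆ {q ∈ S | q.submodule ≤ u.submodule ⊔ v.submodule} := by
    rintro q (rfl | rfl)
    · exact ⟨hu, le_sup_left⟩
    · exact ⟨hv, le_sup_right⟩
  have hcard : ({u, v} : Set (Pt F)).ncard = 2 := Set.ncard_pair huv
  have heq := Set.eq_of_subset_of_ncard_le hsub
    (by rw [hcard]; exact le_of_eq h2) (Set.toFinite _)
  have : p ∈ ({u, v} : Set (Pt F)) := by
    rw [heq]; exact ⟨hp, (sub_le_iff p _).2 hle⟩
  exact this

/-- A nonzero functional on F^3 has 2-dimensional kernel. -/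
lemma ker_isLine {g : (Fin 3 → F) →ₗ[F] F} (hg : g ≠ 0) : IsLine F (LinearMap.ker g) := by
  have hsurj : Function.Surjective g := by
    obtain ⟨m, hm⟩ : ∃ m, g m ≠ 0 := by
      by_contra h
      push_neg at h
      exact hg (LinearMap.ext fun m => by simp [h m])
    intro c
    exact ⟨(c / g m) • m, by simp [div_mul_cancel₀ _ hm]⟩
  have := LinearMap.finrank_range_add_finrank_ker g
  rw [LinearMap.range_eq_top.2 hsurj] at this
  simp only [finrank_top] at this
  have h3 : Module.finrank F (Fin 3 → F) = 3 := by simp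
  have h1 : Module.finrank F F = 1 := Module.finrank_self F
  rw [IsLine]
  omega

lemma eq_of_rep_smul {p : Pt F} {q : Pt F} {a : F} (ha : a ≠ 0) (h : p.rep = a • q.rep) : p = q := by
  apply Projectivization.submodule_injective
  rw [Projectivization.submodule_eq, Projectivization.submodule_eq, h]
  exact Submodule.span_singleton_smul_eq (Ne.isUnit ha) _

end Helpers

section Vertex
set_option linter.unusedSectionVars false
set_option maxHeartbeats 1000000
variable {F : Type} [Field F] [Fintype F]

lemma vertex_prod
    (S : Set (Pt F)) (hS : S.ncard = Fintype.card F + 2)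
    (u v w : Pt F) (huS : u ∈ S) (hvS : v ∈ S) (hwS : w ∈ S)
    (huv : u ≠ v) (huw : u ≠ w) (hvw : v ≠ w)
    (hbuv : secantCount F S (u.submodule ⊔ v.submodule) = 2)
    (hbuw : secantCount F S (u.submodule ⊔ w.submodule) = 2)
    (h1 : {W : Submodule F (Fin 3 → F) | IsLine F W ∧ u.submodule ≤ W ∧
      secantCount F S W = 1}.ncard = 1)
    (A B C : (Fin 3 → F) →ₗ[F] F)
    (hdec : ∀ m : Fin 3 → F, m = A m • u.rep + B m • v.rep + C m • w.rep)
    (hAu : A u.rep = 1) (hBu : B u.rep = 0) (hCu : C u.rep = 0)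
    (hAv : A v.rep = 0) (hBv : B v.rep = 1) (hCv : C v.rep = 0)
    (hAw : A w.rep = 0) (hBw : B w.rep = 0) (hCw : C w.rep = 1)
    (Q : QuadraticForm F (Fin 3 → F))
    (hQnd : LinearMap.BilinForm.Nondegenerate (QuadraticMap.polarBilin Q))
    (hQu : Q u.rep = 0)
    (htanu : ∀ W : Submodule F (Fin 3 → F), IsLine F W → u.submodule ≤ W →
      secantCount F S W = 1 → W = LinearMap.ker (QuadraticMap.polarBilin Q u.rep))
    (g : (Fin 3 → F) →ₗ[F] F) (hg0 : g ≠ 0) (hgu : u.submodule ≤ LinearMap.ker g)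
    (hg3 : secantCount F S (LinearMap.ker g) = 3)
    (T : Finset (Pt F)) (hT : ∀ p, p ∈ T ↔ p ∈ S ∧ p ≠ u ∧ p ≠ v ∧ p ≠ w) :
    g v.rep ≠ 0 ∧ g w.rep ≠ 0 ∧
      QuadraticMap.polarBilin Q u.rep v.rep ≠ 0 ∧ QuadraticMap.polarBilin Q u.rep w.rep ≠ 0 ∧
      ∏ p ∈ T, (B p.rep / C p.rep)
        = -(g w.rep * QuadraticMap.polarBilin Q u.rep v.rep) /
           (g v.rep * QuadraticMap.polarBilin Q u.rep w.rep) := by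
  classical
  have hfin : Finite (Pt F) := pt_finite
  set Bl : (Fin 3 → F) →ₗ[F] F := QuadraticMap.polarBilin Q u.rep with hBldef
  -- Bl is nonzero
  have hBl0 : Bl ≠ 0 := by
    intro h
    exact u.rep_nonzero (hQnd.1 u.rep (fun n => by rw [← hBldef, h]; simp))
  have hBluu : Bl u.rep = 0 := by
    rw [hBldef, QuadraticMap.polarBilin_apply_apply, QuadraticMap.polar_self, hQu, smul_zero]
  -- the tangent line at u
  obtain ⟨W₀, hW₀⟩ := Set.ncard_eq_one.mp h1
  have hW₀mem : W₀ ∈ {W : Submodule F (Fin 3 → F) | IsLine F W ∧ u.submodule ≤ W ∧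
      secantCount F S W = 1} := by rw [hW₀]; exact rfl
  obtain ⟨hW₀line, hW₀u, hW₀1⟩ := hW₀mem
  have hW₀eq : W₀ = LinearMap.ker Bl := htanu W₀ hW₀line hW₀u hW₀1
  have hker1 : secantCount F S (LinearMap.ker Bl) = 1 := hW₀eq ▸ hW₀1
  -- points of S on the tangent = {u}
  have hKset : {p ∈ S | p.submodule ≤ LinearMap.ker Bl} = {u} := by
    obtain ⟨p₀, hp₀⟩ := Set.ncard_eq_one.mp hker1
    have hu : u ∈ {p ∈ S | p.submodule ≤ LinearMap.ker Bl} :=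
      ⟨huS, (sub_le_iff u _).2 (by simp [LinearMap.mem_ker, hBluu])⟩
    rw [hp₀] at hu ⊢
    rw [Set.mem_singleton_iff] at hu
    rw [hu]
  have hBluv : Bl v.rep ≠ 0 := by
    intro h
    have : v ∈ ({u} : Set (Pt F)) := by
      rw [← hKset]; exact ⟨hvS, (sub_le_iff v _).2 (LinearMap.mem_ker.2 h)⟩
    exact huv (this.symm)
  have hBluw : Bl w.rep ≠ 0 := by
    intro h
    have : w ∈ ({u} : Set (Pt F)) := by
      rw [← hKset]; exact ⟨hwS, (sub_le_iff w _).2 (LinearMap.mem_ker.2 h)⟩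
    exact huw (this.symm)
  have hgurep : g u.rep = 0 := (sub_le_iff u _).1 hgu
  have hgv : g v.rep ≠ 0 := by
    intro h
    have hkerline : IsLine F (LinearMap.ker g) := ker_isLine hg0
    have : LinearMap.ker g = u.submodule ⊔ v.submodule :=
      line_eq_sup huv hkerline hgu ((sub_le_iff v _).2 (LinearMap.mem_ker.2 h))
    rw [this, hbuv] at hg3
    exact absurd hg3 (by norm_num)
  have hgw : g w.rep ≠ 0 := by
    intro h
    have hkerline : IsLine F (LinearMap.ker g) := ker_isLine hg0
    have : LinearMap.ker g = u.submodule ⊔ w.submodule :=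
      line_eq_sup huw hkerline hgu ((sub_le_iff w _).2 (LinearMap.mem_ker.2 h))
    rw [this, hbuw] at hg3
    exact absurd hg3 (by norm_num)
  refine ⟨hgv, hgw, hBluv, hBluw, ?_⟩
  set τ : F := -(Bl w.rep) / (Bl v.rep) with hτdef
  set tq : F := -(g w.rep) / (g v.rep) with htqdef
  have hτ0 : τ ≠ 0 := by
    rw [hτdef]
    exact div_ne_zero (neg_ne_zero.2 hBluw) hBluv
  have htq0 : tq ≠ 0 := by
    rw [htqdef]
    exact div_ne_zero (neg_ne_zero.2 hgw) hgv
  have hτBl : τ * Bl v.rep + Bl w.rep = 0 := by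
    rw [hτdef, neg_div, neg_mul, div_mul_cancel₀ _ hBluv]; ring
  have htqg : tq * g v.rep + g w.rep = 0 := by
    rw [htqdef, neg_div, neg_mul, div_mul_cancel₀ _ hgv]; ring
  have hτtq : τ ≠ tq := by
    intro h
    set m : Fin 3 → F := τ • v.rep + w.rep with hmdef
    have hCm : C m = 1 := by rw [hmdef]; simp [hCv, hCw]
    have hAm : A m = 0 := by rw [hmdef]; simp [hAv, hAw]
    have hBlm : Bl m = 0 := by
      rw [hmdef]; simp only [map_add, map_smul, smul_eq_mul]; linear_combination hτBl
    have hgm : g m = 0 := by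
      rw [hmdef]; simp only [map_add, map_smul, smul_eq_mul]
      rw [← h] at htqg; linear_combination htqg
    have hli : LinearIndependent F ![u.rep, m] := by
      rw [LinearIndependent.pair_iff]
      intro s t hst
      have h1 := congrArg A hst
      have h2 := congrArg C hst
      simp only [map_add, map_smul, smul_eq_mul, hAu, hAm, hCu, hCm, map_zero] at h1 h2
      constructor
      · linear_combination h1
      · linear_combination h2
    have hspan2 : Module.finrank F (Submodule.span F {u.rep, m}) = 2 := span_pair_finrank hli
    have hleBl : Submodule.span F {u.rep, m} ≤ LinearMap.ker Bl := by
      rw [Submodule.span_le]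
      rintro q (rfl | rfl)
      · exact LinearMap.mem_ker.2 hBluu
      · exact LinearMap.mem_ker.2 hBlm
    have hleg : Submodule.span F {u.rep, m} ≤ LinearMap.ker g := by
      rw [Submodule.span_le]
      rintro q (rfl | rfl)
      · exact LinearMap.mem_ker.2 hgurep
      · exact LinearMap.mem_ker.2 hgm
    have hBlline : IsLine F (LinearMap.ker Bl) := ker_isLine hBl0
    have hgline : IsLine F (LinearMap.ker g) := ker_isLine hg0
    have e1 : Submodule.span F {u.rep, m} = LinearMap.ker Bl :=
      Submodule.eq_of_le_of_finrank_eq hleBl (by rw [hspan2, hBlline])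
    have e2 : Submodule.span F {u.rep, m} = LinearMap.ker g :=
      Submodule.eq_of_le_of_finrank_eq hleg (by rw [hspan2, hgline])
    rw [← e1, e2, hg3] at hker1
    exact (by norm_num : (3:ℕ) ≠ 1) hker1
  -- coordinates of points of T are nonzero
  have hBC : ∀ p ∈ T, B p.rep ≠ 0 ∧ C p.rep ≠ 0 := by
    intro p hp
    rw [hT] at hp
    obtain ⟨hpS, hpu, hpv, hpw⟩ := hp
    constructor
    · intro h
      have : p.rep ∈ u.submodule ⊔ w.submodule := by
        rw [sup_eq_span_pair, Submodule.mem_span_pair]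
        refine ⟨A p.rep, C p.rep, ?_⟩
        conv_rhs => rw [hdec p.rep]
        simp [h]
      rcases mem_bisecant huS hwS huw hbuw hpS this with h' | h'
      · exact hpu h'
      · exact hpw h'
    · intro h
      have : p.rep ∈ u.submodule ⊔ v.submodule := by
        rw [sup_eq_span_pair, Submodule.mem_span_pair]
        refine ⟨A p.rep, B p.rep, ?_⟩
        conv_rhs => rw [hdec p.rep]
        simp [h]
      rcases mem_bisecant huS hvS huv hbuv hpS this with h' | h'
      · exact hpu h'
      · exact hpv h'
  set sl : Pt F → F := fun p => B p.rep / C p.rep with hsldef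
  set n : F → ℕ := fun t => (T.filter (fun p => sl p = t)).card with hndef
  -- fiber over 0 is empty
  have hn0 : T.filter (fun p => sl p = (0:F)) = ∅ := by
    rw [Finset.filter_eq_empty_iff]
    intro p hp
    obtain ⟨hB, hC⟩ := hBC p hp
    rw [hsldef]
    exact div_ne_zero hB hC
  -- fiber over τ is empty
  have hnτ : T.filter (fun p => sl p = τ) = ∅ := by
    rw [Finset.filter_eq_empty_iff]
    intro p hp hslp
    obtain ⟨hB, hC⟩ := hBC p hp
    have hBp : B p.rep = τ * C p.rep := by
      simp only [hsldef] at hslp; exact (div_eq_iff hC).1 hslp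
    have hBlp : Bl p.rep = 0 := by
      have := congrArg Bl (hdec p.rep)
      simp only [map_add, map_smul, smul_eq_mul, hBluu, mul_zero] at this
      rw [this, hBp]
      linear_combination (C p.rep) * hτBl
    rw [hT] at hp
    have : p ∈ ({u} : Set (Pt F)) := by
      rw [← hKset]
      exact ⟨hp.1, (sub_le_iff p _).2 (LinearMap.mem_ker.2 hBlp)⟩
    exact hp.2.1 this
  -- fiber over tq has two elements
  have hgset3 : {p ∈ S | p.submodule ≤ LinearMap.ker g}.ncard = 3 := hg3
  have hntq : (T.filter (fun p => sl p = tq)).card = 2 := by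
    have hfeq : ↑(T.filter (fun p => sl p = tq))
        = {p ∈ S | p.submodule ≤ LinearMap.ker g} \ {u} := by
      ext p
      simp only [Finset.coe_filter, Set.mem_setOf_eq, Set.mem_diff, Set.mem_singleton_iff, hT]
      constructor
      · rintro ⟨⟨hpS, hpu, hpv, hpw⟩, hslp⟩
        obtain ⟨hB, hC⟩ := hBC p ((hT p).2 ⟨hpS, hpu, hpv, hpw⟩)
        have hBp : B p.rep = tq * C p.rep := by
          simp only [hsldef] at hslp; exact (div_eq_iff hC).1 hslp
        have hgp : g p.rep = 0 := by
          have := congrArg g (hdec p.rep)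
          simp only [map_add, map_smul, smul_eq_mul, hgurep, mul_zero] at this
          rw [this, hBp]
          linear_combination (C p.rep) * htqg
        exact ⟨⟨hpS, (sub_le_iff p _).2 (LinearMap.mem_ker.2 hgp)⟩, hpu⟩
      · rintro ⟨⟨hpS, hple⟩, hpu⟩
        have hgp : g p.rep = 0 := LinearMap.mem_ker.1 ((sub_le_iff p _).1 hple)
        have hpv : p ≠ v := by
          rintro rfl; exact hgv hgp
        have hpw : p ≠ w := by
          rintro rfl; exact hgw hgp
        have hsum : B p.rep * g v.rep + C p.rep * g w.rep = 0 := by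
          have := congrArg g (hdec p.rep)
          simp only [map_add, map_smul, smul_eq_mul, hgurep, mul_zero] at this
          linear_combination hgp - this
        obtain ⟨hB, hC⟩ := hBC p ((hT p).2 ⟨hpS, hpu, hpv, hpw⟩)
        refine ⟨⟨hpS, hpu, hpv, hpw⟩, ?_⟩
        simp only [hsldef, htqdef]
        rw [div_eq_div_iff hC hgv]
        linear_combination hsum
    have : (T.filter (fun p => sl p = tq)).card
        = ({p ∈ S | p.submodule ≤ LinearMap.ker g} \ {u}).ncard := by
      rw [← hfeq, Set.ncard_coe_finset]
    rw [this, Set.ncard_diff_singleton_of_mem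
      (show u ∈ {p ∈ S | p.submodule ≤ LinearMap.ker g} from ⟨huS, hgu⟩), hgset3]
  -- every other fiber is nonempty
  have hnother : ∀ t : F, t ≠ 0 → t ≠ τ → t ≠ tq → 1 ≤ n t := by
    intro t ht0 htτ httq
    rw [hndef]
    rw [Nat.one_le_iff_ne_zero, Ne, Finset.card_eq_zero]
    intro hemp
    set m : Fin 3 → F := t • v.rep + w.rep with hmdef
    have hCm : C m = 1 := by rw [hmdef]; simp [hCv, hCw]
    have hBm : B m = t := by rw [hmdef]; simp [hBv, hBw]
    have hAm : A m = 0 := by rw [hmdef]; simp [hAv, hAw]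
    have hli : LinearIndependent F ![u.rep, m] := by
      rw [LinearIndependent.pair_iff]
      intro s' t' hst
      have h1 := congrArg A hst
      have h2 := congrArg C hst
      simp only [map_add, map_smul, smul_eq_mul, hAu, hAm, hCu, hCm, map_zero] at h1 h2
      exact ⟨by linear_combination h1, by linear_combination h2⟩
    have hWtline : IsLine F (Submodule.span F {u.rep, m}) := span_pair_finrank hli
    have hWtu : u.submodule ≤ Submodule.span F {u.rep, m} :=
      (sub_le_iff u _).2 (Submodule.subset_span (by simp))
    have hWtset : {p ∈ S | p.submodule ≤ Submodule.span F {u.rep, m}} = {u} := by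
      ext p
      simp only [Set.mem_setOf_eq, Set.mem_singleton_iff]
      constructor
      · rintro ⟨hpS, hple⟩
        by_contra hpu
        have hmem : p.rep ∈ Submodule.span F {u.rep, m} := (sub_le_iff p _).1 hple
        rw [Submodule.mem_span_pair] at hmem
        obtain ⟨α, β, hαβ⟩ := hmem
        have hB : B p.rep = β * t := by
          rw [← hαβ]; simp only [map_add, map_smul, smul_eq_mul, hBu, hBm]; ring
        have hC : C p.rep = β := by
          rw [← hαβ]; simp only [map_add, map_smul, smul_eq_mul, hCu, hCm]; ring
        have hβ : β ≠ 0 := by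
          intro h0
          apply hpu
          have hα : α ≠ 0 := by
            intro hα0
            apply p.rep_nonzero
            rw [← hαβ, h0, hα0]; simp
          exact eq_of_rep_smul hα (by rw [← hαβ, h0]; simp)
        have hpv : p ≠ v := by
          rintro rfl; rw [hCv] at hC; exact hβ hC.symm
        have hpw : p ≠ w := by
          rintro rfl
          rw [hBw] at hB
          rcases mul_eq_zero.1 hB.symm with h | h
          · exact hβ h
          · exact ht0 h
        have hpT : p ∈ T := (hT p).2 ⟨hpS, hpu, hpv, hpw⟩
        have hslp : sl p = t := by
          simp only [hsldef]; rw [hB, hC]; field_simp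
        have : p ∈ T.filter (fun p => sl p = t) := Finset.mem_filter.2 ⟨hpT, hslp⟩
        rw [hemp] at this
        exact absurd this (Finset.notMem_empty p)
      · rintro rfl; exact ⟨huS, hWtu⟩
    have hWt1 : secantCount F S (Submodule.span F {u.rep, m}) = 1 := by
      rw [secantCount, hWtset, Set.ncard_singleton]
    have hWteq := htanu _ hWtline hWtu hWt1
    have hmker : Bl m = 0 := by
      have hmW : m ∈ Submodule.span F {u.rep, m} := Submodule.subset_span (by simp)
      rw [hWteq] at hmW
      exact LinearMap.mem_ker.1 hmW
    apply htτ
    rw [hmdef] at hmker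
    simp only [map_add, map_smul, smul_eq_mul] at hmker
    rw [hτdef, eq_div_iff hBluv]
    linear_combination hmker
  -- cardinality of T
  have hq2 : 2 ≤ Fintype.card F := Fintype.one_lt_card
  have hTcard : T.card = Fintype.card F - 1 := by
    have hTeq : (T : Set (Pt F)) = S \ {u, v, w} := by
      ext p
      simp only [Finset.coe_sort_coe, Finset.mem_coe, hT p, Set.mem_diff, Set.mem_insert_iff,
        Set.mem_singleton_iff]
      tauto
    have h3 : ({u, v, w} : Set (Pt F)).ncard = 3 := by
      rw [Set.ncard_insert_of_notMem (by simp [huv, huw]) (Set.toFinite _), Set.ncard_pair hvw]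
    have hsub : ({u, v, w} : Set (Pt F)) ⊆ S := by
      rintro q (rfl | rfl | rfl) <;> assumption
    have : T.card = (S \ ({u, v, w} : Set (Pt F))).ncard := by
      rw [← hTeq, Set.ncard_coe_finset]
    rw [this, Set.ncard_diff hsub (Set.toFinite _), hS, h3]
    omega
  -- summing fibers
  have hsum : T.card = ∑ t : F, n t := by
    rw [hndef]
    exact Finset.card_eq_sum_card_fiberwise (fun p _ => Finset.mem_univ (sl p))
  have h0K : (0:F) ∉ ({τ, tq} : Finset F) := by simp [Ne.symm hτ0, Ne.symm htq0]
  have hτK : τ ∉ ({tq} : Finset F) := by simp [hτtq]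
  have hK3sum : ∑ t ∈ ({0, τ, tq} : Finset F), n t = 2 := by
    rw [Finset.sum_insert h0K, Finset.sum_insert hτK, Finset.sum_singleton]
    have e0 : n 0 = 0 := by simp only [hndef]; rw [hn0]; rfl
    have eτ : n τ = 0 := by simp only [hndef]; rw [hnτ]; rfl
    have etq : n tq = 2 := by simp only [hndef]; exact hntq
    rw [e0, eτ, etq]
    norm_num
  have hK3card : ({0, τ, tq} : Finset F).card = 3 := by
    rw [Finset.card_insert_of_notMem h0K, Finset.card_insert_of_notMem hτK,
      Finset.card_singleton]
  have hsplitsum : (∑ t ∈ Finset.univ \ ({0, τ, tq} : Finset F), n t)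
      + ∑ t ∈ ({0, τ, tq} : Finset F), n t = ∑ t : F, n t :=
    Finset.sum_sdiff (Finset.subset_univ _)
  have hRcard : (Finset.univ \ ({0, τ, tq} : Finset F)).card = Fintype.card F - 3 := by
    rw [Finset.card_sdiff_of_subset (Finset.subset_univ _), hK3card, Finset.card_univ]
  have hge : ∀ t ∈ Finset.univ \ ({0, τ, tq} : Finset F), 1 ≤ n t := by
    intro t ht
    simp only [Finset.mem_sdiff, Finset.mem_univ, Finset.mem_insert, Finset.mem_singleton,
      true_and] at ht
    push_neg at ht
    exact hnother t ht.1 ht.2.1 ht.2.2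
  have hn1 : ∀ t ∈ Finset.univ \ ({0, τ, tq} : Finset F), n t = 1 := by
    have hsumR : ∑ t ∈ Finset.univ \ ({0, τ, tq} : Finset F), n t = Fintype.card F - 3 := by
      omega
    have hconst : ∑ t ∈ Finset.univ \ ({0, τ, tq} : Finset F), (1:ℕ)
        = ∑ t ∈ Finset.univ \ ({0, τ, tq} : Finset F), n t := by
      rw [Finset.sum_const, smul_eq_mul, mul_one, hRcard, hsumR]
    intro t ht
    exact ((Finset.sum_eq_sum_iff_of_le hge).1 hconst t ht).symm
  -- Wilson's theorem
  have hwil : ∏ t ∈ Finset.univ.erase (0:F), t = -1 := by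
    have h1 : ∏ x : Fˣ, ((x : F)) = ((∏ x : Fˣ, x : Fˣ) : F) :=
      (map_prod (Units.coeHom F) (fun x => x) Finset.univ).symm
    rw [FiniteField.prod_univ_units_id_eq_neg_one, Units.val_neg, Units.val_one] at h1
    refine Eq.trans ?_ h1
    refine Finset.prod_bij' (fun t ht => Units.mk0 t (Finset.mem_erase.1 ht).1)
      (fun x _ => (x : F)) ?_ ?_ ?_ ?_ ?_
    · intro a ha; exact Finset.mem_univ _
    · intro x _
      exact Finset.mem_erase.2 ⟨Units.ne_zero x, Finset.mem_univ _⟩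
    · intro a ha; rfl
    · intro x _; exact Units.ext rfl
    · intro a ha; rfl
  -- the product over T
  have hfib : ∏ t : F, ∏ p ∈ T.filter (fun p => sl p = t), sl p = ∏ p ∈ T, sl p :=
    Finset.prod_fiberwise_of_maps_to (fun p _ => Finset.mem_univ (sl p)) sl
  have hinner : ∀ t : F, ∏ p ∈ T.filter (fun p => sl p = t), sl p = t ^ n t := by
    intro t
    rw [Finset.prod_congr rfl (fun p hp => (Finset.mem_filter.1 hp).2), Finset.prod_const]
  have hsplitP : ∏ t : F, (t ^ n t)
      = (∏ t ∈ Finset.univ \ ({0, τ, tq} : Finset F), t ^ n t)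
        * ∏ t ∈ ({0, τ, tq} : Finset F), t ^ n t :=
    (Finset.prod_sdiff (Finset.subset_univ _)).symm
  have hK3P : ∏ t ∈ ({0, τ, tq} : Finset F), t ^ n t = tq ^ 2 := by
    rw [Finset.prod_insert h0K, Finset.prod_insert hτK, Finset.prod_singleton]
    have e0 : n 0 = 0 := by simp only [hndef]; rw [hn0]; rfl
    have eτ : n τ = 0 := by simp only [hndef]; rw [hnτ]; rfl
    have etq : n tq = 2 := by simp only [hndef]; exact hntq
    rw [e0, eτ, etq, pow_zero, pow_zero, one_mul, one_mul]
  have hRP : ∏ t ∈ Finset.univ \ ({0, τ, tq} : Finset F), t ^ n t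
      = ∏ t ∈ Finset.univ \ ({0, τ, tq} : Finset F), t :=
    Finset.prod_congr rfl (fun t ht => by rw [hn1 t ht, pow_one])
  have hReq : Finset.univ \ ({0, τ, tq} : Finset F)
      = (Finset.univ.erase (0:F)) \ ({τ, tq} : Finset F) := by
    ext t
    simp only [Finset.mem_sdiff, Finset.mem_univ, Finset.mem_insert, Finset.mem_singleton,
      Finset.mem_erase, true_and]
    tauto
  have hsubE : ({τ, tq} : Finset F) ⊆ Finset.univ.erase (0:F) := by
    intro t ht
    rcases Finset.mem_insert.1 ht with rfl | ht
    · exact Finset.mem_erase.2 ⟨hτ0, Finset.mem_univ _⟩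
    · rw [Finset.mem_singleton.1 ht]
      exact Finset.mem_erase.2 ⟨htq0, Finset.mem_univ _⟩
  have hpairP : ∏ t ∈ ({τ, tq} : Finset F), t = τ * tq := by
    rw [Finset.prod_insert hτK, Finset.prod_singleton]
  have hEprod : (∏ t ∈ (Finset.univ.erase (0:F)) \ ({τ, tq} : Finset F), t) * (τ * tq) = -1 := by
    rw [← hpairP, Finset.prod_sdiff hsubE, hwil]
  have hRprod : ∏ t ∈ Finset.univ \ ({0, τ, tq} : Finset F), t = -1 / (τ * tq) := by
    rw [hReq, eq_div_iff (mul_ne_zero hτ0 htq0)]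
    exact hEprod
  have hfinal : ∏ p ∈ T, sl p = -1 / (τ * tq) * tq ^ 2 := by
    rw [← hfib, Finset.prod_congr rfl (fun t _ => hinner t), hsplitP, hK3P, hRP, hRprod]
  have : ∏ p ∈ T, sl p = -(g w.rep * Bl v.rep) / (g v.rep * Bl w.rep) := by
    rw [hfinal, hτdef, htqdef]
    field_simp
  exact this
end Vertex

set_option maxHeartbeats 1000000 in
/-- If `x, y, z` are points of `S_{4/3}` lying on a nondegenerate conic whose tangent lines
at `x, y, z` are the tangents to `S` there, and the lines joining `x, y, z` are bi-secants
of `S`, then `g_x(z) g_y(x) g_z(y) = - g_x(y) g_y(z) g_z(x)` and the three `3`-secants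
`ker g_x`, `ker g_y`, `ker g_z` are concurrent. -/
theorem three_secants_concurrent (F : Type) [Field F] [Fintype F]
    (hq : Odd (Fintype.card F))
    (S : Set (Pt F)) (hS : S.ncard = Fintype.card F + 2)
    (x y z : Pt F) (hx : x ∈ S43 F S) (hy : y ∈ S43 F S) (hz : z ∈ S43 F S)
    (hxy : x ≠ y) (hxz : x ≠ z) (hyz : y ≠ z)
    (hbixy : secantCount F S (x.submodule ⊔ y.submodule) = 2)
    (hbixz : secantCount F S (x.submodule ⊔ z.submodule) = 2)
    (hbiyz : secantCount F S (y.submodule ⊔ z.submodule) = 2)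
    (Q : QuadraticForm F (Fin 3 → F))
    (hQnd : LinearMap.BilinForm.Nondegenerate (QuadraticMap.polarBilin Q))
    (hQx : Q x.rep = 0) (hQy : Q y.rep = 0) (hQz : Q z.rep = 0)
    (htan : ∀ u ∈ ({x, y, z} : Set (Pt F)), ∀ W : Submodule F (Fin 3 → F),
      IsLine F W → u.submodule ≤ W → secantCount F S W = 1 →
      W = LinearMap.ker (QuadraticMap.polarBilin Q u.rep))
    (gx gy gz : (Fin 3 → F) →ₗ[F] F)
    (hgx : gx ≠ 0 ∧ x.submodule ≤ LinearMap.ker gx ∧ secantCount F S (LinearMap.ker gx) = 3)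
    (hgy : gy ≠ 0 ∧ y.submodule ≤ LinearMap.ker gy ∧ secantCount F S (LinearMap.ker gy) = 3)
    (hgz : gz ≠ 0 ∧ z.submodule ≤ LinearMap.ker gz ∧ secantCount F S (LinearMap.ker gz) = 3) :
    gx z.rep * gy x.rep * gz y.rep = -(gx y.rep * gy z.rep * gz x.rep) ∧
    ∃ p : Pt F, p.submodule ≤ LinearMap.ker gx ∧ p.submodule ≤ LinearMap.ker gy ∧
      p.submodule ≤ LinearMap.ker gz := by
  classical
  obtain ⟨hxS, hx1, hx3, hx2⟩ := hx
  obtain ⟨hyS, hy1, hy3, hy2⟩ := hy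
  obtain ⟨hzS, hz1, hz3, hz2⟩ := hz
  obtain ⟨hgx0, hgxx, hgx3⟩ := hgx
  obtain ⟨hgy0, hgyy, hgy3⟩ := hgy
  obtain ⟨hgz0, hgzz, hgz3⟩ := hgz
  have hfin : Finite (Pt F) := pt_finite
  have hfty : Fintype (Pt F) := Fintype.ofFinite _
  -- linear independence of the triangle
  have hxyz : LinearIndependent F ![x.rep, y.rep, z.rep] := by
    have hpair : LinearIndependent F ![y.rep, z.rep] := li_pair hyz
    rw [show (![x.rep, y.rep, z.rep]) = Fin.cons x.rep ![y.rep, z.rep] from rfl,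
      linearIndependent_fin_cons]
    refine ⟨hpair, ?_⟩
    intro hmem
    have hr : Set.range ![y.rep, z.rep] = {y.rep, z.rep} := by
      rw [Matrix.range_cons, Matrix.range_cons, Matrix.range_empty]
      rw [Set.union_comm]; simp
    rw [hr, ← sup_eq_span_pair] at hmem
    rcases mem_bisecant hyS hzS hyz hbiyz hxS hmem with h | h
    · exact hxy h
    · exact hxz h
  have hcard3 : Fintype.card (Fin 3) = Module.finrank F (Fin 3 → F) := by simp
  set b : Module.Basis (Fin 3) F (Fin 3 → F) :=
    basisOfLinearIndependentOfCardEqFinrank hxyz hcard3 with hbdef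
  have hb0 : b 0 = x.rep := by
    rw [hbdef, coe_basisOfLinearIndependentOfCardEqFinrank]; rfl
  have hb1 : b 1 = y.rep := by
    rw [hbdef, coe_basisOfLinearIndependentOfCardEqFinrank]; rfl
  have hb2 : b 2 = z.rep := by
    rw [hbdef, coe_basisOfLinearIndependentOfCardEqFinrank]; rfl
  set A : (Fin 3 → F) →ₗ[F] F := b.coord 0 with hAdef
  set Bc : (Fin 3 → F) →ₗ[F] F := b.coord 1 with hBcdef
  set Cc : (Fin 3 → F) →ₗ[F] F := b.coord 2 with hCcdef
  have hdec : ∀ m : Fin 3 → F, m = A m • x.rep + Bc m • y.rep + Cc m • z.rep := by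
    intro m
    have h := b.sum_repr m
    rw [Fin.sum_univ_three, hb0, hb1, hb2] at h
    rw [hAdef, hBcdef, hCcdef]
    simp only [Module.Basis.coord_apply]
    exact h.symm
  have hv : ∀ i j : Fin 3, b.coord i (b j) = if j = i then 1 else 0 := by
    intro i j
    rw [Module.Basis.coord_apply, Module.Basis.repr_self]
    exact Finsupp.single_apply
  have hAx : A x.rep = 1 := by rw [hAdef, ← hb0]; simpa using hv 0 0
  have hBx : Bc x.rep = 0 := by rw [hBcdef, ← hb0]; simpa using hv 1 0
  have hCx : Cc x.rep = 0 := by rw [hCcdef, ← hb0]; simpa using hv 2 0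
  have hAy : A y.rep = 0 := by rw [hAdef, ← hb1]; simpa using hv 0 1
  have hBy : Bc y.rep = 1 := by rw [hBcdef, ← hb1]; simpa using hv 1 1
  have hCy : Cc y.rep = 0 := by rw [hCcdef, ← hb1]; simpa using hv 2 1
  have hAz : A z.rep = 0 := by rw [hAdef, ← hb2]; simpa using hv 0 2
  have hBz : Bc z.rep = 0 := by rw [hBcdef, ← hb2]; simpa using hv 1 2
  have hCz : Cc z.rep = 1 := by rw [hCcdef, ← hb2]; simpa using hv 2 2
  -- the common Finset of other points of S
  set T : Finset (Pt F) :=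
    Finset.univ.filter (fun p => p ∈ S ∧ p ≠ x ∧ p ≠ y ∧ p ≠ z) with hTdef
  have hT : ∀ p : Pt F, p ∈ T ↔ p ∈ S ∧ p ≠ x ∧ p ≠ y ∧ p ≠ z := by
    intro p; rw [hTdef]; simp
  -- three applications of the vertex lemma
  obtain ⟨hgxy, hgxz, hBlxy, hBlxz, P1⟩ :=
    vertex_prod S hS x y z hxS hyS hzS hxy hxz hyz hbixy hbixz hx1
      A Bc Cc hdec hAx hBx hCx hAy hBy hCy hAz hBz hCz Q hQnd hQx
      (htan x (by simp)) gx hgx0 hgxx hgx3 T hT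
  obtain ⟨hgyz, hgyx, hBlyz, hBlyx, P2⟩ :=
    vertex_prod S hS y z x hyS hzS hxS hyz hxy.symm hxz.symm hbiyz
      (by rw [sup_comm]; exact hbixy) hy1
      Bc Cc A (fun m => (hdec m).trans (add_rotate _ _ _))
      hBy hCy hAy hBz hCz hAz hBx hCx hAx Q hQnd hQy
      (htan y (by simp)) gy hgy0 hgyy hgy3 T
      (by intro p; rw [hT]; tauto)
  obtain ⟨hgzx, hgzy, hBlzx, hBlzy, P3⟩ :=
    vertex_prod S hS z x y hzS hxS hyS hxz.symm hyz.symm hxy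
      (by rw [sup_comm]; exact hbixz) (by rw [sup_comm]; exact hbiyz) hz1
      Cc A Bc (fun m => ((hdec m).trans (add_rotate _ _ _)).trans (add_rotate _ _ _))
      hCz hAz hBz hCx hAx hBx hCy hAy hBy Q hQnd hQz
      (htan z (by simp)) gz hgz0 hgzz hgz3 T
      (by intro p; rw [hT]; tauto)
  -- coordinates of points of T are all nonzero
  have hcoord : ∀ p ∈ T, A p.rep ≠ 0 ∧ Bc p.rep ≠ 0 ∧ Cc p.rep ≠ 0 := by
    intro p hp
    rw [hT] at hp
    obtain ⟨hpS, hpx, hpy, hpz⟩ := hp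
    refine ⟨?_, ?_, ?_⟩
    · intro h
      have hmem : p.rep ∈ y.submodule ⊔ z.submodule := by
        rw [sup_eq_span_pair, Submodule.mem_span_pair]
        refine ⟨Bc p.rep, Cc p.rep, ?_⟩
        conv_rhs => rw [hdec p.rep]
        simp [h]
      rcases mem_bisecant hyS hzS hyz hbiyz hpS hmem with h' | h'
      · exact hpy h'
      · exact hpz h'
    · intro h
      have hmem : p.rep ∈ x.submodule ⊔ z.submodule := by
        rw [sup_eq_span_pair, Submodule.mem_span_pair]
        refine ⟨A p.rep, Cc p.rep, ?_⟩
        conv_rhs => rw [hdec p.rep]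
        simp [h]
      rcases mem_bisecant hxS hzS hxz hbixz hpS hmem with h' | h'
      · exact hpx h'
      · exact hpz h'
    · intro h
      have hmem : p.rep ∈ x.submodule ⊔ y.submodule := by
        rw [sup_eq_span_pair, Submodule.mem_span_pair]
        refine ⟨A p.rep, Bc p.rep, ?_⟩
        conv_rhs => rw [hdec p.rep]
        simp [h]
      rcases mem_bisecant hxS hyS hxy hbixy hpS hmem with h' | h'
      · exact hpx h'
      · exact hpy h'
  -- the product of the three products is 1
  have hone : (∏ p ∈ T, (Bc p.rep / Cc p.rep)) * ((∏ p ∈ T, (Cc p.rep / A p.rep))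
      * ∏ p ∈ T, (A p.rep / Bc p.rep)) = 1 := by
    rw [← Finset.prod_mul_distrib, ← Finset.prod_mul_distrib]
    apply Finset.prod_eq_one
    intro p hp
    obtain ⟨hA, hB, hC⟩ := hcoord p hp
    field_simp
  rw [P1, P2, P3] at hone
  -- symmetry of the polar form
  have hc1 : QuadraticMap.polarBilin Q y.rep x.rep = QuadraticMap.polarBilin Q x.rep y.rep := by
    rw [QuadraticMap.polarBilin_apply_apply, QuadraticMap.polarBilin_apply_apply]
    exact QuadraticMap.polar_comm _ _ _
  have hc2 : QuadraticMap.polarBilin Q z.rep x.rep = QuadraticMap.polarBilin Q x.rep z.rep := by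
    rw [QuadraticMap.polarBilin_apply_apply, QuadraticMap.polarBilin_apply_apply]
    exact QuadraticMap.polar_comm _ _ _
  have hc3 : QuadraticMap.polarBilin Q z.rep y.rep = QuadraticMap.polarBilin Q y.rep z.rep := by
    rw [QuadraticMap.polarBilin_apply_apply, QuadraticMap.polarBilin_apply_apply]
    exact QuadraticMap.polar_comm _ _ _
  rw [hc1, hc2, hc3] at hone
  set Pxy : F := QuadraticMap.polarBilin Q x.rep y.rep with hPxy
  set Pyz : F := QuadraticMap.polarBilin Q y.rep z.rep with hPyz
  set Pxz : F := QuadraticMap.polarBilin Q x.rep z.rep with hPxz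
  have hBprod : Pxy * Pyz * Pxz ≠ 0 :=
    mul_ne_zero (mul_ne_zero hBlxy hBlyz) hBlxz
  have hkey : gx z.rep * gy x.rep * gz y.rep = -(gx y.rep * gy z.rep * gz x.rep) := by
    field_simp [hgxy, hgyz, hgzx, hBlxy, hBlyz, hBlxz] at hone
    apply mul_right_cancel₀ hBprod
    linear_combination -hone * (Pxy * Pyz * Pxz)
  refine ⟨hkey, ?_⟩
  -- the common point of the three 3-secants
  have hgxxr : gx x.rep = 0 := (sub_le_iff x _).1 hgxx
  have hgyyr : gy y.rep = 0 := (sub_le_iff y _).1 hgyy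
  have hgzzr : gz z.rep = 0 := (sub_le_iff z _).1 hgzz
  set vv : Fin 3 → F := (-(gy z.rep * gx y.rep)) • x.rep + (-(gx z.rep * gy x.rep)) • y.rep
    + (gx y.rep * gy x.rep) • z.rep with hvvdef
  have hvv0 : vv ≠ 0 := by
    intro h0
    have : Cc vv = gx y.rep * gy x.rep := by
      rw [hvvdef]
      simp [hCx, hCy, hCz]
    rw [h0] at this
    simp at this
    rcases this with h | h
    · exact hgxy h
    · exact hgyx h
  refine ⟨Projectivization.mk F vv hvv0, ?_, ?_, ?_⟩ <;>
    rw [Projectivization.submodule_mk, Submodule.span_singleton_le_iff_mem, LinearMap.mem_ker,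
      hvvdef]
  · simp only [map_add, map_smul, smul_eq_mul, hgxxr]
    ring
  · simp only [map_add, map_smul, smul_eq_mul, hgyyr]
    ring
  · simp only [map_add, map_smul, smul_eq_mul, hgzzr]
    linear_combination (gz x.rep) * hkey - hkey * gz x.rep + (-1 : F) * hkey
end

section
/- Let q be an odd prime power, t ≥ 1 an integer, and S a set of q+t+1 points of PG(2,q). Let S_t denote the set of points of S incident with at most one tangent of S. Then o(S) ≥ 2·(q+t+1−|S_t|). -/
open Projectivization

/-- For a set `S` of `q + t + 1` points, `q` odd, `t ≥ 1`, letting `S_t` be the set of points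
of `S` incident with at most one tangent, the number of odd secants of `S` is at least
`2 (q + t + 1 - |S_t|)`. -/
theorem odd_secants_ge_of_St (F : Type) [Field F] [Fintype F]
    (hq : Odd (Fintype.card F)) (t : ℕ) (ht : 1 ≤ t)
    (S : Set (Pt F)) (hS : S.ncard = Fintype.card F + t + 1) :
    2 * ((Fintype.card F : ℤ) + t + 1 -
        ({x ∈ S | linesThroughWithCount F S x 1 ≤ 1}.ncard : ℤ)) ≤ (oddSecants F S : ℤ) := by
  classical
  have hPt : Finite (Pt F) := Quotient.finite _
  set q := Fintype.card F
  set St : Set (Pt F) := {x ∈ S | linesThroughWithCount F S x 1 ≤ 1} with hSt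
  have hSfin : S.Finite := Set.toFinite S
  set T : Set (Submodule F (Fin 3 → F)) := {W | IsLine F W ∧ secantCount F S W = 1} with hTdef
  set Tx : Pt F → Set (Submodule F (Fin 3 → F)) :=
    fun x => {W | IsLine F W ∧ x.submodule ≤ W ∧ secantCount F S W = 1} with hTx
  have hTfin : T.Finite := Set.toFinite T
  have hTxfin : ∀ x, (Tx x).Finite := fun x => Set.toFinite _
  -- each tangent has a unique point of S on it
  have key : ∀ W ∈ T, ∃ a, {p ∈ S | p.submodule ≤ W} = {a} := by
    intro W hW
    exact Set.ncard_eq_one.mp hW.2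
  -- T as a biUnion
  have hunion : hTfin.toFinset = hSfin.toFinset.biUnion (fun x => (hTxfin x).toFinset) := by
    ext W
    simp only [Set.Finite.mem_toFinset, Finset.mem_biUnion]
    constructor
    · intro hW
      obtain ⟨a, ha⟩ := key W hW
      have haa : a ∈ {p ∈ S | p.submodule ≤ W} := ha ▸ rfl
      exact ⟨a, haa.1, hW.1, haa.2, hW.2⟩
    · rintro ⟨x, hx, h1, h2, h3⟩
      exact ⟨h1, h3⟩
  have hdisj : ∀ x ∈ hSfin.toFinset, ∀ y ∈ hSfin.toFinset, x ≠ y →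
      Disjoint ((hTxfin x).toFinset) ((hTxfin y).toFinset) := by
    intro x hx y hy hxy
    simp only [Set.Finite.mem_toFinset] at hx hy
    refine Finset.disjoint_left.mpr ?_
    intro W hWx hWy
    simp only [Set.Finite.mem_toFinset] at hWx hWy
    obtain ⟨a, ha⟩ := key W ⟨hWx.1, hWx.2.2⟩
    have hxa : x ∈ {p ∈ S | p.submodule ≤ W} := ⟨hx, hWx.2.1⟩
    have hya : y ∈ {p ∈ S | p.submodule ≤ W} := ⟨hy, hWy.2.1⟩
    rw [ha] at hxa hya
    exact hxy (hxa.trans hya.symm)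
  have hcard : T.ncard = ∑ x ∈ hSfin.toFinset, (Tx x).ncard := by
    rw [Set.ncard_eq_toFinset_card T hTfin, hunion, Finset.card_biUnion hdisj]
    exact Finset.sum_congr rfl fun x _ => (Set.ncard_eq_toFinset_card _ (hTxfin x)).symm
  -- points not in St have at least 2 tangents
  set Df : Finset (Pt F) := hSfin.toFinset.filter (fun x => x ∉ St) with hDf
  have hge : ∀ x ∈ Df, 2 ≤ (Tx x).ncard := by
    intro x hx
    rw [hDf, Finset.mem_filter, Set.Finite.mem_toFinset] at hx
    have h1 : ¬ linesThroughWithCount F S x 1 ≤ 1 := fun h => hx.2 ⟨hx.1, h⟩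
    have h2 : linesThroughWithCount F S x 1 = (Tx x).ncard := rfl
    omega
  have hDfcard : Df.card = (S \ St).ncard := by
    rw [Set.ncard_eq_toFinset_card _ (hSfin.diff : (S \ St).Finite)]
    congr 1
    ext x
    simp [hDf, Set.mem_diff]
  have h1 : 2 * (S \ St).ncard ≤ T.ncard := by
    rw [hcard, ← hDfcard]
    calc 2 * Df.card = ∑ _x ∈ Df, 2 := by rw [Finset.sum_const, smul_eq_mul, mul_comm]
    _ ≤ ∑ x ∈ Df, (Tx x).ncard := Finset.sum_le_sum hge
    _ ≤ ∑ x ∈ hSfin.toFinset, (Tx x).ncard :=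
        Finset.sum_le_sum_of_subset (Finset.filter_subset _ _)
  have h2 : T.ncard ≤ oddSecants F S := by
    refine Set.ncard_le_ncard ?_ (Set.toFinite _)
    intro W hW
    exact ⟨hW.1, hW.2 ▸ odd_one⟩
  have hStS : St ⊆ S := fun x hx => hx.1
  have hStcard : St.ncard ≤ S.ncard := Set.ncard_le_ncard hStS hSfin
  have hdiff : (S \ St).ncard = S.ncard - St.ncard := Set.ncard_diff hStS (hSfin.subset hStS)
  have hfin : 2 * (S.ncard - St.ncard) ≤ oddSecants F S := by
    rw [← hdiff]; exact le_trans h1 h2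
  rw [hS] at hStcard hfin
  push_cast
  omega
end
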